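/- Let q be a formal variable and define (a;q)_l = ∏_{i=0}^{l−1}(1 − a q^i). Let k ≥ 1, r ≥ 2, n ≥ k+1, and let λ be a (k,r,n)-admissible partition (λᵢ − λ_{i+k} ≥ r for all valid i). Consider the product P = ∏_{1≤i<j≤n} (t^{j−i+1}; q)_{λᵢ−λⱼ} / (t^{j−i}; q)_{λᵢ−λⱼ} as a rational function in t and q. Under the substitution homomorphism sending (t,q) to a point with t^{k+1}q^{r−1} = 1 generically (i.e., with t^x q^y = 1 iff (x,y) ∈ ℤ·(k+1, r−1)), the multiplicity of vanishing of P (order of zero in the defining equation t^{k+1}q^{r−1} − 1) equals ⌊n/(k+1)⌋. -/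

import Mathlib

open Classical in
theorem stmt_11 (k r n : ℕ) (hk : 1 ≤ k) (hr : 2 ≤ r) (hn : k + 1 ≤ n)
    (lam : ℕ → ℕ)
    (hdec : ∀ i, 1 ≤ i → i < n → lam (i + 1) ≤ lam i)
    (hadm : ∀ i, 1 ≤ i → i + k ≤ n → lam (i + k) + r ≤ lam i) :
    ((((Finset.Icc 1 n ×ˢ Finset.Icc 1 n) ×ˢ Finset.range (lam 1)).filter
        (fun x => x.1.1 < x.1.2 ∧ x.2 + lam x.1.2 < lam x.1.1 ∧
          ∃ l, 1 ≤ l ∧ x.1.1 + (k + 1) * l = x.1.2 + 1 ∧ x.2 = (r - 1) * l)).card : ℤ)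
      - ((((Finset.Icc 1 n ×ˢ Finset.Icc 1 n) ×ˢ Finset.range (lam 1)).filter
        (fun x => x.1.1 < x.1.2 ∧ x.2 + lam x.1.2 < lam x.1.1 ∧
          ∃ l, 1 ≤ l ∧ x.1.1 + (k + 1) * l = x.1.2 ∧ x.2 = (r - 1) * l)).card : ℤ)
      = (n / (k + 1) : ℕ) := by
  -- lam is antitone on [1, n]
  have anti : ∀ j, ∀ i, 1 ≤ i → i ≤ j → j ≤ n → lam j ≤ lam i := by
    intro j
    induction j with
    | zero => intro i h1 h2 _; omega
    | succ j ih =>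
      intro i h1 h2 h3
      rcases eq_or_lt_of_le h2 with h | h
      · rw [h]
      · exact (hdec j (by omega) (by omega)).trans (ih i h1 (by omega) (by omega))
  -- chain of admissibility
  have chain : ∀ l i, 1 ≤ i → i + k * l ≤ n → lam (i + k * l) + r * l ≤ lam i := by
    intro l
    induction l with
    | zero => intro i _ _; simp
    | succ l ih =>
      intro i h1 h2
      have ekl : k * (l + 1) = k * l + k := by ring
      have erl : r * (l + 1) = r * l + r := by ring
      have hstep : lam (i + k * l + k) + r ≤ lam (i + k * l) :=
        hadm (i + k * l) (by omega) (by omega)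
      have hih : lam (i + k * l) + r * l ≤ lam i := ih i h1 (by omega)
      have e3 : i + k * (l + 1) = i + k * l + k := by omega
      rw [e3, erl]
      omega
  have erl : ∀ l, r * l = (r - 1) * l + l := by
    intro l
    conv_lhs => rw [show r = (r - 1) + 1 by omega]
    ring
  -- key gap estimate : for j ≥ i + k*l with l ≥ 1, lam j + (r-1)*l + 1 ≤ lam i
  have gap : ∀ l i j, 1 ≤ l → 1 ≤ i → i + k * l ≤ j → j ≤ n →
      lam j + ((r - 1) * l + 1) ≤ lam i := by
    intro l i j hl hi hij hjn
    have h1 : lam (i + k * l) + r * l ≤ lam i := chain l i hi (by omega)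
    have h2 : lam j ≤ lam (i + k * l) := anti j (i + k * l) (by omega) hij hjn
    have := erl l
    omega
  -- s1.card = S1.card
  have c1 : ((Finset.Icc 1 n ×ˢ Finset.Icc 1 n).filter
        (fun p => p.1 + (k + 1) * p.2 ≤ n + 1)).card =
      (((Finset.Icc 1 n ×ˢ Finset.Icc 1 n) ×ˢ Finset.range (lam 1)).filter
        (fun x => x.1.1 < x.1.2 ∧ x.2 + lam x.1.2 < lam x.1.1 ∧
          ∃ l, 1 ≤ l ∧ x.1.1 + (k + 1) * l = x.1.2 + 1 ∧ x.2 = (r - 1) * l)).card := by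
    apply Finset.card_nbij' (i := fun p => ((p.1, p.1 + (k + 1) * p.2 - 1), (r - 1) * p.2))
      (j := fun x => (x.1.1, (x.1.2 + 1 - x.1.1) / (k + 1)))
    · intro p hp
      simp only [Finset.mem_coe, Finset.mem_filter, Finset.mem_product, Finset.mem_Icc] at hp
      obtain ⟨⟨⟨hi1, hin⟩, ⟨hl1, hln⟩⟩, hle⟩ := hp
      have ek : (k + 1) * p.2 = k * p.2 + p.2 := by ring
      have hkl : 2 ≤ (k + 1) * p.2 := by nlinarith
      have hg : lam (p.1 + (k + 1) * p.2 - 1) + ((r - 1) * p.2 + 1) ≤ lam p.1 :=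
        gap p.2 p.1 (p.1 + (k + 1) * p.2 - 1) hl1 hi1 (by omega) (by omega)
      have hlam1 : lam p.1 ≤ lam 1 := anti p.1 1 le_rfl hi1 (by omega)
      simp only [Finset.mem_coe, Finset.mem_filter, Finset.mem_product, Finset.mem_Icc, Finset.mem_range]
      refine ⟨⟨⟨⟨hi1, by omega⟩, ⟨by omega, by omega⟩⟩, by omega⟩, by omega, by omega,
        p.2, hl1, by omega, rfl⟩
    · intro x hx
      simp only [Finset.mem_coe, Finset.mem_filter, Finset.mem_product, Finset.mem_Icc,
        Finset.mem_range] at hx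
      obtain ⟨⟨⟨⟨hi1, hin⟩, ⟨hj1, hjn⟩⟩, hm⟩, hij, hlt, l, hl1, hel, hml⟩ := hx
      have hdiv : (x.1.2 + 1 - x.1.1) / (k + 1) = l := by
        have : x.1.2 + 1 - x.1.1 = (k + 1) * l := by omega
        rw [this, Nat.mul_div_cancel_left _ (by omega)]
      simp only [Finset.mem_coe, Finset.mem_filter, Finset.mem_product, Finset.mem_Icc, hdiv]
      have hkl : l ≤ (k + 1) * l := Nat.le_mul_of_pos_left l (by omega)
      exact ⟨⟨⟨hi1, hin⟩, ⟨hl1, by omega⟩⟩, by omega⟩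
    · intro p hp
      simp only [Finset.mem_coe, Finset.mem_filter, Finset.mem_product, Finset.mem_Icc] at hp
      obtain ⟨⟨⟨hi1, hin⟩, ⟨hl1, hln⟩⟩, hle⟩ := hp
      have ek : (k + 1) * p.2 = k * p.2 + p.2 := by ring
      have hkl : 2 ≤ (k + 1) * p.2 := by nlinarith
      have e : p.1 + (k + 1) * p.2 - 1 + 1 - p.1 = (k + 1) * p.2 := by omega
      simp only [e, Nat.mul_div_cancel_left _ (show 0 < k + 1 by omega)]
    · intro x hx
      simp only [Finset.mem_coe, Finset.mem_filter, Finset.mem_product, Finset.mem_Icc,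
        Finset.mem_range] at hx
      obtain ⟨⟨⟨⟨hi1, hin⟩, ⟨hj1, hjn⟩⟩, hm⟩, hij, hlt, l, hl1, hel, hml⟩ := hx
      have hdiv : (x.1.2 + 1 - x.1.1) / (k + 1) = l := by
        have : x.1.2 + 1 - x.1.1 = (k + 1) * l := by omega
        rw [this, Nat.mul_div_cancel_left _ (by omega)]
      have e : x.1.1 + (k + 1) * l - 1 = x.1.2 := by omega
      simp only [hdiv, e, ← hml]
  -- s2.card = S2.card
  have c2 : ((Finset.Icc 1 n ×ˢ Finset.Icc 1 n).filter
        (fun p => p.1 + (k + 1) * p.2 ≤ n)).card =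
      (((Finset.Icc 1 n ×ˢ Finset.Icc 1 n) ×ˢ Finset.range (lam 1)).filter
        (fun x => x.1.1 < x.1.2 ∧ x.2 + lam x.1.2 < lam x.1.1 ∧
          ∃ l, 1 ≤ l ∧ x.1.1 + (k + 1) * l = x.1.2 ∧ x.2 = (r - 1) * l)).card := by
    apply Finset.card_nbij' (i := fun p => ((p.1, p.1 + (k + 1) * p.2), (r - 1) * p.2))
      (j := fun x => (x.1.1, (x.1.2 - x.1.1) / (k + 1)))
    · intro p hp
      simp only [Finset.mem_coe, Finset.mem_filter, Finset.mem_product, Finset.mem_Icc] at hp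
      obtain ⟨⟨⟨hi1, hin⟩, ⟨hl1, hln⟩⟩, hle⟩ := hp
      have ek : (k + 1) * p.2 = k * p.2 + p.2 := by ring
      have hkl : 2 ≤ (k + 1) * p.2 := by nlinarith
      have hg : lam (p.1 + (k + 1) * p.2) + ((r - 1) * p.2 + 1) ≤ lam p.1 :=
        gap p.2 p.1 (p.1 + (k + 1) * p.2) hl1 hi1 (by omega) (by omega)
      have hlam1 : lam p.1 ≤ lam 1 := anti p.1 1 le_rfl hi1 (by omega)
      simp only [Finset.mem_coe, Finset.mem_filter, Finset.mem_product, Finset.mem_Icc, Finset.mem_range]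
      refine ⟨⟨⟨⟨hi1, by omega⟩, ⟨by omega, by omega⟩⟩, by omega⟩, by omega, by omega,
        p.2, hl1, rfl, rfl⟩
    · intro x hx
      simp only [Finset.mem_coe, Finset.mem_filter, Finset.mem_product, Finset.mem_Icc,
        Finset.mem_range] at hx
      obtain ⟨⟨⟨⟨hi1, hin⟩, ⟨hj1, hjn⟩⟩, hm⟩, hij, hlt, l, hl1, hel, hml⟩ := hx
      have hdiv : (x.1.2 - x.1.1) / (k + 1) = l := by
        have : x.1.2 - x.1.1 = (k + 1) * l := by omega
        rw [this, Nat.mul_div_cancel_left _ (by omega)]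
      simp only [Finset.mem_coe, Finset.mem_filter, Finset.mem_product, Finset.mem_Icc, hdiv]
      have hkl : l ≤ (k + 1) * l := Nat.le_mul_of_pos_left l (by omega)
      exact ⟨⟨⟨hi1, hin⟩, ⟨hl1, by omega⟩⟩, by omega⟩
    · intro p hp
      have e : p.1 + (k + 1) * p.2 - p.1 = (k + 1) * p.2 := by omega
      simp only [e, Nat.mul_div_cancel_left _ (show 0 < k + 1 by omega)]
    · intro x hx
      simp only [Finset.mem_coe, Finset.mem_filter, Finset.mem_product, Finset.mem_Icc,
        Finset.mem_range] at hx
      obtain ⟨⟨⟨⟨hi1, hin⟩, ⟨hj1, hjn⟩⟩, hm⟩, hij, hlt, l, hl1, hel, hml⟩ := hx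
      have hdiv : (x.1.2 - x.1.1) / (k + 1) = l := by
        have : x.1.2 - x.1.1 = (k + 1) * l := by omega
        rw [this, Nat.mul_div_cancel_left _ (by omega)]
      have e : x.1.1 + (k + 1) * l = x.1.2 := hel
      simp only [hdiv, e, ← hml]
  have hsub : ((Finset.Icc 1 n ×ˢ Finset.Icc 1 n).filter
        (fun p => p.1 + (k + 1) * p.2 ≤ n)) ⊆ ((Finset.Icc 1 n ×ˢ Finset.Icc 1 n).filter
        (fun p => p.1 + (k + 1) * p.2 ≤ n + 1)) := by
    intro p hp
    simp only [Finset.mem_coe, Finset.mem_filter] at hp ⊢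
    exact ⟨hp.1, by omega⟩
  have cdiff : (((Finset.Icc 1 n ×ˢ Finset.Icc 1 n).filter
        (fun p => p.1 + (k + 1) * p.2 ≤ n + 1)) \ ((Finset.Icc 1 n ×ˢ Finset.Icc 1 n).filter
        (fun p => p.1 + (k + 1) * p.2 ≤ n))).card = n / (k + 1) := by
    have hset : (((Finset.Icc 1 n ×ˢ Finset.Icc 1 n).filter
        (fun p => p.1 + (k + 1) * p.2 ≤ n + 1)) \ ((Finset.Icc 1 n ×ˢ Finset.Icc 1 n).filter
        (fun p => p.1 + (k + 1) * p.2 ≤ n)))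
        = (Finset.Icc 1 n ×ˢ Finset.Icc 1 n).filter
          (fun p => p.1 + (k + 1) * p.2 = n + 1) := by
      ext p
      simp only [Finset.mem_coe, Finset.mem_sdiff, Finset.mem_filter]
      constructor
      · rintro ⟨⟨hT', h1⟩, h2⟩
        refine ⟨hT', ?_⟩
        by_contra h
        exact h2 ⟨hT', by omega⟩
      · rintro ⟨hT', he⟩
        exact ⟨⟨hT', by omega⟩, fun h => by omega⟩
    rw [hset]
    have hcard : n / (k + 1) = (Finset.Icc 1 (n / (k + 1))).card := by
      rw [Nat.card_Icc, Nat.add_sub_cancel]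
    rw [hcard]
    symm
    apply Finset.card_nbij' (i := fun l => (n + 1 - (k + 1) * l, l)) (j := fun p => p.2)
    · intro l hl
      simp only [Finset.mem_coe, Finset.mem_Icc] at hl
      have hmul : l * (k + 1) ≤ n := (Nat.le_div_iff_mul_le (by omega)).1 hl.2
      have hmul' : (k + 1) * l ≤ n := by rw [mul_comm]; exact hmul
      have hll : l ≤ (k + 1) * l := Nat.le_mul_of_pos_left l (by omega)
      simp only [Finset.mem_coe, Finset.mem_filter, Finset.mem_product, Finset.mem_Icc]
      exact ⟨⟨⟨by omega, by omega⟩, ⟨hl.1, by omega⟩⟩, by omega⟩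
    · intro p hp
      simp only [Finset.mem_coe, Finset.mem_filter, Finset.mem_product, Finset.mem_Icc] at hp
      obtain ⟨⟨⟨hi1, hin⟩, hl1, hln⟩, he⟩ := hp
      simp only [Finset.mem_coe, Finset.mem_Icc]
      refine ⟨hl1, ?_⟩
      rw [Nat.le_div_iff_mul_le (by omega)]
      have : (k + 1) * p.2 = p.2 * (k + 1) := by ring
      omega
    · intro l hl; rfl
    · intro p hp
      simp only [Finset.mem_coe, Finset.mem_filter, Finset.mem_product, Finset.mem_Icc] at hp
      obtain ⟨⟨⟨hi1, hin⟩, hl1, hln⟩, he⟩ := hp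
      have e : n + 1 - (k + 1) * p.2 = p.1 := by omega
      simp only [e]
  rw [← c1, ← c2, ← cdiff]
  have hle := Finset.card_le_card hsub
  have hcd := Finset.card_sdiff_of_subset hsub
  omega
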